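/- arXiv:2102.12977 — 6 statements merged into one kernel-verified Lean document; each statement's English description precedes it below -/
import Mathlib

section
/- Let p be a prime with p ≡ 1 (mod 16). Let π ∈ ℤ[√2] be an element of norm p with conjugate π′, and let i ∈ 𝔽_p satisfy i² = −1. Then π is a square modulo π′ if and only if 1 + i is a square in 𝔽_p. -/
private lemma aux_b_isSquare {p : ℕ} [Fact p.Prime] (hp4 : p % 4 = 1) (hp8 : p % 8 = 1)
    {a b : ℤ} (hnorm : a * a - 2 * (b * b) = (p : ℤ)) (hb : (b : ZMod p) ≠ 0) :
    IsSquare (b : ZMod p) := by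
  have hpp := (Fact.out : p.Prime)
  -- gcd a b = 1
  have hg : Int.gcd a b = 1 := by
    by_contra hgne
    have hga : ((Int.gcd a b : ℕ) : ℤ) ∣ a := Int.gcd_dvd_left a b
    have hgb : ((Int.gcd a b : ℕ) : ℤ) ∣ b := Int.gcd_dvd_right a b
    have hgp : ((Int.gcd a b * Int.gcd a b : ℕ) : ℤ) ∣ (p : ℤ) := by
      push_cast
      rw [← hnorm]
      exact dvd_sub (mul_dvd_mul hga hga) (Dvd.dvd.mul_left (mul_dvd_mul hgb hgb) 2)
    have hgp' : Int.gcd a b * Int.gcd a b ∣ p := Int.natCast_dvd_natCast.mp hgp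
    rcases (Nat.Prime.eq_one_or_self_of_dvd hpp _ (dvd_of_mul_left_dvd hgp')) with h1 | h1
    · exact hgne h1
    · have h2 : p * p ∣ p := h1 ▸ hgp'
      have hple := Nat.le_of_dvd hpp.pos h2
      nlinarith [hpp.two_le]
  -- p does not divide b
  have hpb : ¬ (p : ℤ) ∣ b := fun h => hb ((ZMod.intCast_zmod_eq_zero_iff_dvd b p).2 h)
  have hneg : IsSquare (-1 : ZMod p) := (ZMod.exists_sq_eq_neg_one_iff (p := p)).2 (by omega)
  have htwo : IsSquare (2 : ZMod p) := (ZMod.exists_sq_eq_two_iff (p := p) (by omega)).2 (Or.inl hp8)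
  set n := b.natAbs with hn
  have hn0 : n ≠ 0 := fun h => hb (by simp [Int.natAbs_eq_zero.mp h])
  set k := n.factorization 2 with hk
  set m := n / 2 ^ k with hm
  have hsplit : 2 ^ k * m = n := Nat.ordProj_mul_ordCompl_eq_self n 2
  have hmodd : Odd m := Nat.odd_iff.2
    (Nat.two_dvd_ne_zero.mp (Nat.not_dvd_ordCompl Nat.prime_two hn0))
  have hmn : m ∣ n := Nat.ordCompl_dvd n 2
  have hmb : (m : ℤ) ∣ b := (Int.natCast_dvd_natCast.2 hmn).trans Int.natAbs_dvd_self
  have hpm : ¬ (p : ℤ) ∣ (m : ℤ) := fun h => hpb (h.trans hmb)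
  have hm0 : ((m : ℤ) : ZMod p) ≠ 0 := fun h => hpm ((ZMod.intCast_zmod_eq_zero_iff_dvd _ p).1 h)
  have hgam : Int.gcd a (m : ℤ) = 1 := by
    have h1 : Int.gcd a (m : ℤ) ∣ Int.gcd a b := by
      have : Nat.gcd a.natAbs m ∣ Nat.gcd a.natAbs n :=
        Nat.dvd_gcd (Nat.gcd_dvd_left _ _) ((Nat.gcd_dvd_right _ _).trans hmn)
      simpa [Int.gcd, Int.natAbs_natCast] using this
    rw [hg] at h1
    exact Nat.dvd_one.mp h1
  -- Jacobi symbol computation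
  have hdvd : (m : ℤ) ∣ a ^ 2 - (p : ℤ) := by
    have : a ^ 2 - (p : ℤ) = 2 * (b * b) := by rw [← hnorm]; ring
    rw [this]
    exact Dvd.dvd.mul_left (hmb.mul_right b) 2
  have hmodeq : ((p : ℤ)) % (m : ℤ) = (a ^ 2) % (m : ℤ) := Int.modEq_iff_dvd.mpr hdvd
  have hJ : legendreSym p (m : ℤ) = 1 := by
    rw [jacobiSym.legendreSym.to_jacobiSym,
      ← jacobiSym.quadratic_reciprocity_one_mod_four hp4 hmodd,
      jacobiSym.mod_left' hmodeq]
    exact jacobiSym.sq_one' hgam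
  have hmsq : IsSquare ((m : ℕ) : ZMod p) := by
    have := (legendreSym.eq_one_iff p hm0).1 hJ
    simpa using this
  have hnsq : IsSquare ((n : ℕ) : ZMod p) := by
    rw [← hsplit]
    push_cast
    exact (htwo.pow k).mul hmsq
  have hnegn : IsSquare (-(n : ZMod p)) := by simpa using hneg.mul hnsq
  rcases Int.natAbs_eq b with h | h
  · rw [h, Int.cast_natCast]; exact hnsq
  · rw [h, Int.cast_neg, Int.cast_natCast]; exact hnegn

/-- Let `p ≡ 1 (mod 16)` be prime, `π ∈ ℤ[√2]` of norm `p` with conjugate `π′ = star π`,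
and `i ∈ 𝔽_p` with `i² = −1`. Then `π` is a square modulo `π′` if and only if `1 + i`
is a square in `𝔽_p`. -/
theorem sq_mod_conj_iff_one_add_i_sq (p : ℕ) (hp : Nat.Prime p) (hmod : p % 16 = 1)
    (π : ℤ√2) (hπ : π.norm = (p : ℤ)) (i : ZMod p) (hi : i ^ 2 = -1) :
    (∃ σ : ℤ√2, star π ∣ π - σ ^ 2) ↔ ∃ t : ZMod p, t ^ 2 = 1 + i := by
  haveI : Fact p.Prime := ⟨hp⟩
  have hnorm : π.re * π.re - 2 * (π.im * π.im) = (p : ℤ) := by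
    rw [← hπ, Zsqrtd.norm_def]; ring
  set a : ℤ := π.re with hadef
  set b : ℤ := π.im with hbdef
  set A : ZMod p := ((a : ℤ) : ZMod p) with hAdef
  set B : ZMod p := ((b : ℤ) : ZMod p) with hBdef
  have hp2 : (2 : ZMod p) ≠ 0 := by
    intro h
    have hd : p ∣ 2 := (ZMod.natCast_eq_zero_iff 2 p).1 (by exact_mod_cast h)
    have hd2 : p ≤ 2 := Nat.le_of_dvd (by norm_num) hd
    have := hp.two_le
    omega
  have hB : B ≠ 0 := by
    intro h
    have hpb : (p : ℤ) ∣ b := (ZMod.intCast_zmod_eq_zero_iff_dvd b p).1 h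
    have hpa : (p : ℤ) ∣ a := by
      have h1 : (p : ℤ) ∣ a * a := by
        have : a * a = (p : ℤ) + 2 * (b * b) := by linarith [hnorm]
        rw [this]
        exact dvd_add (dvd_refl _) (Dvd.dvd.mul_left (hpb.mul_right b) 2)
      exact (Int.Prime.dvd_mul' hp h1).elim id id
    have h2 : (p : ℤ) * p ∣ (p : ℤ) := by
      have h2' : (p : ℤ) * p ∣ a * a - 2 * (b * b) :=
        dvd_sub (mul_dvd_mul hpa hpa) (Dvd.dvd.mul_left (mul_dvd_mul hpb hpb) 2)
      rwa [hnorm] at h2'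
    have h3 := Int.le_of_dvd (by exact_mod_cast hp.pos) h2
    have h4 : (2 : ℤ) ≤ p := by exact_mod_cast hp.two_le
    nlinarith
  have ha2 : A ^ 2 = 2 * B ^ 2 := by
    have : ((a * a - 2 * (b * b) : ℤ) : ZMod p) = ((p : ℕ) : ZMod p) := by
      rw [hnorm]; push_cast; ring
    rw [ZMod.natCast_self] at this
    push_cast at this
    linear_combination this
  have hA : A ≠ 0 := by
    intro h
    rw [h] at ha2
    have hz : 2 * B ^ 2 = 0 := by linear_combination - ha2
    have hB2 : B ^ 2 = 0 := (mul_eq_zero.mp hz).resolve_left hp2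
    exact hB ((pow_eq_zero_iff (by norm_num : (2:ℕ) ≠ 0)).1 hB2)
  have hπ0 : π ≠ 0 := by
    intro h
    rw [h, Zsqrtd.norm_zero] at hπ
    exact_mod_cast hp.ne_zero (by exact_mod_cast hπ.symm)
  have hpmul : π * star π = ((p : ℕ) : ℤ√2) := by
    have := Zsqrtd.norm_eq_mul_conj π
    rw [hπ] at this
    exact_mod_cast this.symm
  have hpbZ : ¬ (p : ℤ) ∣ b := fun h => hB ((ZMod.intCast_zmod_eq_zero_iff_dvd b p).2 h)
  have key : ∀ z : ℤ√2, star π ∣ z ↔ B * (z.re : ZMod p) + A * (z.im : ZMod p) = 0 := by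
    intro z
    constructor
    · rintro ⟨w, rfl⟩
      have hint : (b * (star π * w).re + a * (star π * w).im : ℤ) = w.im * p := by
        rw [← hnorm]
        simp only [Zsqrtd.re_mul, Zsqrtd.im_mul, Zsqrtd.re_star, Zsqrtd.im_star, ← hadef, ← hbdef]
        ring
      have : ((b * (star π * w).re + a * (star π * w).im : ℤ) : ZMod p) = 0 := by
        rw [hint]
        push_cast [ZMod.natCast_self]
        ring
      push_cast at this
      linear_combination this
    · intro h
      have h1 : (p : ℤ) ∣ b * z.re + a * z.im := by
        apply (ZMod.intCast_zmod_eq_zero_iff_dvd _ p).1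
        push_cast
        linear_combination h
      have h2 : (p : ℤ) ∣ (z * π).re := by
        have hbmul : (p : ℤ) ∣ b * (z * π).re := by
          have : b * (z * π).re = a * (b * z.re + a * z.im) - z.im * (a * a - 2 * (b * b)) := by
            simp only [Zsqrtd.re_mul, Zsqrtd.im_mul, ← hadef, ← hbdef]
            ring
          rw [this, hnorm]
          exact dvd_sub (h1.mul_left a) (Dvd.dvd.mul_left dvd_rfl z.im)
        exact (Int.Prime.dvd_mul' hp hbmul).resolve_left hpbZ
      have h3 : (p : ℤ) ∣ (z * π).im := by
        have : (z * π).im = b * z.re + a * z.im := by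
          simp only [Zsqrtd.im_mul, ← hadef, ← hbdef]
          ring
        rw [this]; exact h1
      have h4 : ((p : ℕ) : ℤ√2) ∣ z * π := by
        have := (Zsqrtd.intCast_dvd (p : ℤ) (z * π)).2 ⟨h2, h3⟩
        exact_mod_cast this
      obtain ⟨w, hw⟩ := h4
      have hnonsq : ∀ n : ℤ, (2:ℤ) ≠ n * n := by
        intro n h
        have h2' : n.natAbs * n.natAbs = 2 := by
          have hh := Int.natAbs_mul_self (a := n)
          rw [← h] at hh
          exact_mod_cast hh
        have hd : n.natAbs ∣ 2 := ⟨n.natAbs, h2'.symm⟩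
        have hle : n.natAbs ≤ 2 := Nat.le_of_dvd (by norm_num) hd
        set m := n.natAbs
        interval_cases m <;> omega
      have hzero : (z - star π * w) * π = 0 := by
        rw [sub_mul, hw, ← hpmul]; ring
      have hnw : ((z - star π * w) * π).norm = 0 := by rw [hzero, Zsqrtd.norm_zero]
      rw [Zsqrtd.norm_mul, hπ] at hnw
      have hzn : (z - star π * w).norm = 0 := by
        rcases mul_eq_zero.mp hnw with h' | h'
        · exact h'
        · exact absurd h' (by exact_mod_cast hp.ne_zero)
      have := (Zsqrtd.norm_eq_zero hnonsq _).1 hzn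
      exact ⟨w, sub_eq_zero.mp this⟩
  have lhs_iff : (∃ σ : ℤ√2, star π ∣ π - σ ^ 2) ↔ IsSquare (2 * A) := by
    constructor
    · rintro ⟨σ, hσ⟩
      rw [key] at hσ
      have hre : ((π - σ ^ 2).re : ℤ) = a - (σ.re * σ.re + 2 * (σ.im * σ.im)) := by
        rw [sq]; simp only [Zsqrtd.re_sub, Zsqrtd.re_mul, ← hadef]; ring
      have him : ((π - σ ^ 2).im : ℤ) = b - (σ.re * σ.im + σ.im * σ.re) := by
        rw [sq]; simp only [Zsqrtd.im_sub, Zsqrtd.im_mul, ← hbdef]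
      rw [hre, him] at hσ
      push_cast at hσ
      refine ⟨(B * (σ.re : ZMod p) + A * (σ.im : ZMod p)) * B⁻¹, ?_⟩
      field_simp
      linear_combination B * hσ - ((σ.im : ZMod p))^2 * ha2
    · rintro ⟨c, hc⟩
      obtain ⟨x, hx⟩ := ZMod.intCast_surjective (n := p) c
      refine ⟨((x : ℤ) : ℤ√2), (key _).2 ?_⟩
      have hre : ((π - ((x : ℤ) : ℤ√2) ^ 2).re : ℤ) = a - x * x := by
        rw [sq]
        simp only [Zsqrtd.re_sub, Zsqrtd.re_mul, Zsqrtd.re_intCast, Zsqrtd.im_intCast, ← hadef]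
        ring
      have him : ((π - ((x : ℤ) : ℤ√2) ^ 2).im : ℤ) = b := by
        rw [sq]
        simp only [Zsqrtd.im_sub, Zsqrtd.im_mul, Zsqrtd.re_intCast, Zsqrtd.im_intCast, ← hbdef]
        ring
      rw [hre, him]
      push_cast
      rw [hx]
      linear_combination B * hc
  have rhs_iff : (∃ t : ZMod p, t ^ 2 = 1 + i) ↔ IsSquare (1 + i) := by
    constructor
    · rintro ⟨t, ht⟩; exact ⟨t, by rw [← ht, sq]⟩
    · rintro ⟨c, hc⟩; exact ⟨c, by rw [hc, sq]⟩
  have hp8 : p % 8 = 1 := by omega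
  have hp4 : p % 4 = 1 := by omega
  have htwo : IsSquare (2 : ZMod p) := (ZMod.exists_sq_eq_two_iff (p := p) (by omega)).2 (Or.inl hp8)
  have hbsq : IsSquare B := aux_b_isSquare hp4 hp8 hnorm hB
  obtain ⟨k, hk⟩ : ∃ k, p = 16 * k + 1 := ⟨p / 16, by omega⟩
  have he : p / 2 = 8 * k := by omega
  have h2A : 2 * A ≠ 0 := mul_ne_zero hp2 hA
  have h1i : 1 + i ≠ 0 := by
    intro h
    have hieq : i = -1 := by linear_combination h
    rw [hieq] at hi
    exact hp2 (by linear_combination hi)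
  have hEB : B ^ (p / 2) = 1 := (ZMod.euler_criterion p hB).1 hbsq
  have hE2 : (2 : ZMod p) ^ (p / 2) = 1 := (ZMod.euler_criterion p hp2).1 htwo
  have e1 : (2 * A) ^ (p / 2) = 2 ^ (4 * k) := by
    rw [he] at hE2 hEB ⊢
    have hA8 : A ^ (8 * k) = 2 ^ (4 * k) := by
      have h1 : A ^ (8 * k) = (A ^ 2) ^ (4 * k) := by
        rw [show 8 * k = 2 * (4 * k) from by ring, pow_mul]
      rw [h1, ha2, mul_pow, ← pow_mul, show 2 * (4 * k) = 8 * k from by ring, hEB, mul_one]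
    rw [mul_pow, hE2, one_mul, hA8]
  have e2 : (1 + i) ^ (p / 2) = 2 ^ (4 * k) := by
    rw [he, show 8 * k = 2 * (4 * k) from by ring, pow_mul]
    have h1 : (1 + i) ^ 2 = 2 * i := by linear_combination hi
    rw [h1, mul_pow]
    have h2 : i ^ (4 * k) = 1 := by
      rw [show 4 * k = 2 * (2 * k) from by ring, pow_mul, hi]
      exact Even.neg_one_pow ⟨k, by ring⟩
    rw [h2, mul_one]
  rw [lhs_iff, rhs_iff, ZMod.euler_criterion p h2A, ZMod.euler_criterion p h1i, e1, e2]
end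

section
/- Let p be a prime with p ≡ 9 (mod 16). Let π ∈ ℤ[√2] be an element of norm p with conjugate π′, and let i ∈ 𝔽_p satisfy i² = −1. Then exactly one of the following two statements holds: (a) π is a square modulo π′; (b) 1 + i is a square in 𝔽_p. -/
open scoped NumberTheorySymbols in
lemma aux_isSquare_B (p : ℕ) (hp : p.Prime) (hp8 : p % 8 = 1) (A B : ℤ)
    (h : A * A - 2 * (B * B) = (p : ℤ)) : IsSquare ((B : ZMod p)) := by
  haveI : Fact p.Prime := ⟨hp⟩
  rcases eq_or_ne B 0 with rfl | hB0
  · exact ⟨0, by simp⟩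
  have hple := hp.two_le
  have hp2 : p ≠ 2 := by omega
  have hp4 : p % 4 = 1 := by omega
  -- A and B are coprime
  have hg : Nat.Coprime A.natAbs B.natAbs := by
    by_contra hg
    obtain ⟨q, hq, hqd⟩ := Nat.exists_prime_and_dvd hg
    have hqA : (q:ℤ) ∣ A := Int.dvd_natAbs.mp (Int.natCast_dvd_natCast.mpr ((Nat.dvd_gcd_iff.mp hqd).1))
    have hqB : (q:ℤ) ∣ B := Int.dvd_natAbs.mp (Int.natCast_dvd_natCast.mpr ((Nat.dvd_gcd_iff.mp hqd).2))
    have hqq : (q:ℤ) * q ∣ (p:ℤ) := by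
      rw [← h]
      exact dvd_sub (mul_dvd_mul hqA hqA) (Dvd.dvd.mul_left (mul_dvd_mul hqB hqB) 2)
    have hqqn : q * q ∣ p := by exact_mod_cast hqq
    have hqp : q = p := (Nat.prime_dvd_prime_iff_eq hq hp).mp (dvd_trans (Dvd.intro q rfl) hqqn)
    subst hqp
    have := Nat.le_of_dvd (by omega) hqqn
    nlinarith
  set c := B.natAbs with hc
  have hc0 : c ≠ 0 := Int.natAbs_ne_zero.mpr hB0
  set e := c.factorization 2 with he
  set m := c / 2 ^ e with hm
  have hcm : 2 ^ e * m = c := Nat.ordProj_mul_ordCompl_eq_self c 2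
  have hm2 : ¬ 2 ∣ m := Nat.not_dvd_ordCompl Nat.prime_two hc0
  have hmodd : Odd m := Nat.odd_iff.mpr (by omega)
  have hmc : m ∣ c := Dvd.intro_left _ hcm
  have hmB : (m:ℤ) ∣ B := Int.dvd_natAbs.mp (Int.natCast_dvd_natCast.mpr hmc)
  have hgAm : Int.gcd A (m:ℤ) = 1 := by
    have := Nat.Coprime.coprime_dvd_right hmc hg
    simpa [Int.gcd] using this
  have hmod : (p:ℤ) % (m:ℕ) = (A^2) % m := by
    have hd : (m:ℤ) ∣ A^2 - p := by
      have h2 : A^2 - (p:ℤ) = 2*(B*B) := by ring_nf; linarith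
      rw [h2]
      exact Dvd.dvd.mul_left (hmB.mul_left B) 2
    exact Int.modEq_iff_dvd.mpr hd
  have hJm : J((m:ℤ) | p) = 1 := by
    have h1 : J((m:ℕ) | p) = J((p:ℕ) | m) :=
      jacobiSym.quadratic_reciprocity_one_mod_four' hmodd hp4
    rw [h1, jacobiSym.mod_left' hmod, jacobiSym.sq_one' hgAm]
  have hsqm : IsSquare (((m:ℤ)) : ZMod p) := ZMod.isSquare_of_jacobiSym_eq_one hJm
  have hsq2 : IsSquare (2 : ZMod p) := (ZMod.exists_sq_eq_two_iff hp2).mpr (Or.inl hp8)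
  have hsqn1 : IsSquare (-1 : ZMod p) := ZMod.exists_sq_eq_neg_one_iff.mpr (by omega)
  have hsqc : IsSquare ((c : ℕ) : ZMod p) := by
    rw [← hcm]
    push_cast
    exact (hsq2.pow e).mul (by exact_mod_cast hsqm)
  rcases Int.natAbs_eq B with hB | hB
  · rw [hB, Int.cast_natCast]; exact hsqc
  · rw [hB, Int.cast_neg, Int.cast_natCast]; have := hsqn1.mul hsqc; rwa [neg_one_mul] at this

lemma aux_two_nonsquare : Zsqrtd.Nonsquare 2 := by
  constructor
  intro n h
  rcases n with _|_|n
  · simp at h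
  · simp at h
  · nlinarith

/-- Let `p ≡ 9 (mod 16)` be prime, `π ∈ ℤ[√2]` of norm `p` with conjugate `π′ = star π`,
and `i ∈ 𝔽_p` with `i² = −1`. Then exactly one of the following holds:
(a) `π` is a square modulo `π′`; (b) `1 + i` is a square in `𝔽_p`. -/
theorem sq_mod_conj_xor_one_add_i_sq (p : ℕ) (hp : Nat.Prime p) (hmod : p % 16 = 9)
    (π : ℤ√2) (hπ : π.norm = (p : ℤ)) (i : ZMod p) (hi : i ^ 2 = -1) :
    Xor' (∃ σ : ℤ√2, star π ∣ π - σ ^ 2) (∃ t : ZMod p, t ^ 2 = 1 + i) := by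
  haveI : Fact p.Prime := ⟨hp⟩
  have hple := hp.two_le
  set A := π.re with hA
  set B := π.im with hB
  have hnorm : A * A - 2 * (B * B) = (p : ℤ) := by
    rw [← hπ, Zsqrtd.norm_def]; ring
  have hpp : Prime (p : ℤ) := Int.prime_iff_natAbs_prime.mpr (by simpa using hp)
  have hpB : ¬ (p:ℤ) ∣ B := by
    intro hd
    have h1 : (p:ℤ) ∣ A * A := by
      have hAA : A * A = (p:ℤ) + 2 * (B * B) := by linarith
      rw [hAA]
      exact dvd_add dvd_rfl (Dvd.dvd.mul_left (dvd_mul_of_dvd_left hd B) 2)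
    have h2 : (p:ℤ) ∣ A := (hpp.dvd_mul.mp h1).elim id id
    have h3 : (p:ℤ) * p ∣ (p:ℤ) := by
      conv_rhs => rw [← hnorm]
      exact dvd_sub (mul_dvd_mul h2 h2) (Dvd.dvd.mul_left (mul_dvd_mul hd hd) 2)
    have h4 : (p:ℤ) ∣ 1 := by
      rcases h3 with ⟨w, hw⟩
      refine ⟨w, ?_⟩
      have hpne : (p:ℤ) ≠ 0 := by positivity
      have h5 : (p:ℤ) * 1 = (p:ℤ) * (p * w) := by linear_combination hw
      exact mul_left_cancel₀ hpne h5
    have := Int.le_of_dvd one_pos h4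
    omega
  have hpA : ¬ (p:ℤ) ∣ A := by
    intro hd
    have h1 : (p:ℤ) ∣ 2 * (B * B) := by
      have h2BB : 2 * (B * B) = A * A - (p:ℤ) := by linarith
      rw [h2BB]; exact dvd_sub (dvd_mul_of_dvd_left hd A) dvd_rfl
    rcases hpp.dvd_mul.mp h1 with h | h
    · have := Int.le_of_dvd (by norm_num) h; omega
    · exact hpB ((hpp.dvd_mul.mp h).elim id id)
  -- pass to ZMod p
  set a' : ZMod p := (A : ZMod p) with ha'
  set b' : ZMod p := (B : ZMod p) with hb'
  have ha0 : a' ≠ 0 := fun h => hpA ((ZMod.intCast_zmod_eq_zero_iff_dvd A p).mp h)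
  have hb0 : b' ≠ 0 := fun h => hpB ((ZMod.intCast_zmod_eq_zero_iff_dvd B p).mp h)
  have hab : a' ^ 2 = 2 * b' ^ 2 := by
    have := congrArg (fun z : ℤ => (z : ZMod p)) hnorm
    simp only [Int.cast_sub, Int.cast_mul, Int.cast_ofNat, Int.cast_natCast,
      ZMod.natCast_self] at this
    push_cast at this
    rw [← ha', ← hb'] at this
    linear_combination this
  have h2ne : (2 : ZMod p) ≠ 0 := by
    intro h
    have h2 : ((2:ℕ) : ZMod p) = 0 := by exact_mod_cast h
    have := (ZMod.natCast_eq_zero_iff 2 p).mp h2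
    have := Nat.le_of_dvd (by norm_num) this
    omega
  -- square root of 2 in ZMod p
  set s : ZMod p := a' * b'⁻¹ with hs
  have hss : s * s = ((2:ℤ) : ZMod p) := by
    push_cast
    field_simp [hs]
    have hbb : b' * b'⁻¹ = 1 := mul_inv_cancel₀ hb0
    linear_combination b'⁻¹ ^ 2 * hab + (2 * (b' * b'⁻¹) + 2) * hbb
  set φ : ℤ√2 →+* ZMod p := Zsqrtd.lift ⟨s, hss⟩ with hφ
  have hφz : ∀ z : ℤ√2, φ z = (z.re : ZMod p) + (z.im : ZMod p) * s := fun z => rfl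
  have hφstar : φ (star π) = 0 := by
    rw [hφz, Zsqrtd.re_star, Zsqrtd.im_star, hs]
    push_cast
    rw [← ha', ← hb']
    field_simp
    ring
  have hφπ : φ π = 2 * a' := by
    rw [hφz, hs, ← ha', ← hb']
    field_simp
    ring
  -- (a) iff 2*a' is a square
  have haiff : (∃ σ : ℤ√2, star π ∣ π - σ ^ 2) ↔ ∃ t : ZMod p, t ^ 2 = 2 * a' := by
    constructor
    · rintro ⟨σ, w, hw⟩
      refine ⟨φ σ, ?_⟩
      have := congrArg φ hw
      rw [map_sub, map_pow, map_mul, hφstar, zero_mul, hφπ, sub_eq_zero] at this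
      exact this.symm
    · rintro ⟨t, ht⟩
      set T : ℤ := (t.val : ℤ) with hT
      have hTt : ((T : ℤ) : ZMod p) = t := by
        rw [hT]
        push_cast
        simp [ZMod.natCast_val, ZMod.cast_id]
      refine ⟨(T : ℤ√2), ?_⟩
      haveI : Zsqrtd.Nonsquare 2 := aux_two_nonsquare
      haveI : NoZeroDivisors (ℤ√(2:ℤ)) := inferInstanceAs (NoZeroDivisors (ℤ√((2:ℕ):ℤ)))
      haveI : IsDomain (ℤ√(2:ℤ)) := NoZeroDivisors.to_isDomain _
      have hπ0 : π ≠ 0 := by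
        intro h
        rw [h, Zsqrtd.norm_zero] at hπ
        exact_mod_cast hp.ne_zero (by exact_mod_cast hπ.symm)
      have key : ((π.norm : ℤ) : ℤ√2) ∣ π * (π - (T : ℤ√2) ^ 2) := by
        rw [hπ]
        rw [Zsqrtd.intCast_dvd]
        constructor
        · show (p:ℤ) ∣ (π * (π - (T : ℤ√2) ^ 2)).re
          rw [← ZMod.intCast_zmod_eq_zero_iff_dvd]
          have hre : (π * (π - (T : ℤ√2) ^ 2)).re = A * A + 2 * (B * B) - A * (T * T) := by
            simp [sq, ← Int.cast_mul, Zsqrtd.re_mul, Zsqrtd.im_mul, Zsqrtd.re_sub,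
              Zsqrtd.im_sub, Zsqrtd.re_intCast, Zsqrtd.im_intCast]
            ring
          rw [hre]
          push_cast
          rw [← ha', ← hb', hTt]
          linear_combination (-1 : ZMod p) * hab - a' * ht
        · show (p:ℤ) ∣ (π * (π - (T : ℤ√2) ^ 2)).im
          rw [← ZMod.intCast_zmod_eq_zero_iff_dvd]
          have him : (π * (π - (T : ℤ√2) ^ 2)).im = A * B + B * A - B * (T * T) := by
            simp [sq, ← Int.cast_mul, Zsqrtd.re_mul, Zsqrtd.im_mul, Zsqrtd.re_sub,
              Zsqrtd.im_sub, Zsqrtd.re_intCast, Zsqrtd.im_intCast]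
            ring
          rw [him]
          push_cast
          rw [← ha', ← hb', hTt]
          linear_combination (-b') * ht
      rw [Zsqrtd.norm_eq_mul_conj] at key
      rcases key with ⟨w, hw⟩
      refine ⟨w, mul_left_cancel₀ hπ0 ?_⟩
      rw [hw]; ring
  -- Euler criterion computations
  have hp8 : p % 8 = 1 := by omega
  have hbsq : IsSquare b' := aux_isSquare_B p hp hp8 A B hnorm
  have hbpow : b' ^ (p / 2) = 1 := (ZMod.euler_criterion p hb0).mp hbsq
  have h2sq : IsSquare (2 : ZMod p) := (ZMod.exists_sq_eq_two_iff (by omega)).mpr (Or.inl hp8)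
  have h2pow : (2 : ZMod p) ^ (p / 2) = 1 := (ZMod.euler_criterion p h2ne).mp h2sq
  obtain ⟨k, hk⟩ : ∃ k, p = 16 * k + 9 := ⟨p / 16, by omega⟩
  have hdiv : p / 2 = 8 * k + 4 := by omega
  set u : ZMod p := 2 ^ (4 * k + 2) with hu
  have husq : u * u = 1 := by
    rw [hu, ← pow_add]
    have he : 4 * k + 2 + (4 * k + 2) = p / 2 := by omega
    rw [he, h2pow]
  have hne11 : (1 : ZMod p) ≠ -1 := by
    intro h
    apply h2ne
    linear_combination h
  have hPa : (∃ σ : ℤ√2, star π ∣ π - σ ^ 2) ↔ u = 1 := by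
    rw [haiff]
    have h2a0 : 2 * a' ≠ 0 := mul_ne_zero h2ne ha0
    have hsq_iff : (∃ t : ZMod p, t ^ 2 = 2 * a') ↔ IsSquare (2 * a') := by
      constructor
      · rintro ⟨t, ht⟩; exact ⟨t, by rw [← ht]; ring⟩
      · rintro ⟨t, ht⟩; exact ⟨t, by rw [ht]; ring⟩
    rw [hsq_iff, ZMod.euler_criterion p h2a0]
    have hval : (2 * a') ^ (p / 2) = u := by
      rw [hdiv, mul_pow]
      have e1 : a' ^ (8 * k + 4) = (a' ^ 2) ^ (4 * k + 2) := by
        rw [← pow_mul]; congr 1; omega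
      rw [e1, hab, mul_pow]
      have e2 : (b' ^ 2) ^ (4 * k + 2) = b' ^ (p / 2) := by
        rw [← pow_mul, hdiv]; congr 1; omega
      rw [e2, hbpow, mul_one]
      have e3 : (2 : ZMod p) ^ (8 * k + 4) = 1 := by rw [← hdiv, h2pow]
      rw [e3, one_mul]
    rw [hval]
  have hPb : (∃ t : ZMod p, t ^ 2 = 1 + i) ↔ u = -1 := by
    have h1i0 : 1 + i ≠ 0 := by
      intro h
      have hieq : i = -1 := by linear_combination h
      rw [hieq] at hi
      apply h2ne
      linear_combination hi
    have hsq_iff : (∃ t : ZMod p, t ^ 2 = 1 + i) ↔ IsSquare (1 + i) := by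
      constructor
      · rintro ⟨t, ht⟩; exact ⟨t, by rw [← ht]; ring⟩
      · rintro ⟨t, ht⟩; exact ⟨t, by rw [ht]; ring⟩
    rw [hsq_iff, ZMod.euler_criterion p h1i0]
    have hval : (1 + i) ^ (p / 2) = -u := by
      rw [hdiv]
      have e1 : (1 + i) ^ (8 * k + 4) = ((1 + i) ^ 2) ^ (4 * k + 2) := by
        rw [← pow_mul]; congr 1; omega
      rw [e1]
      have e2 : (1 + i) ^ 2 = 2 * i := by linear_combination hi
      rw [e2, mul_pow]
      have e3 : i ^ (4 * k + 2) = -1 := by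
        have e4 : i ^ (4 * k + 2) = (i ^ 2) ^ (2 * k + 1) := by
          rw [← pow_mul]; congr 1; omega
        rw [e4, hi]
        exact Odd.neg_one_pow (Nat.odd_iff.mpr (by omega))
      rw [e3]
      ring
    rw [hval, neg_eq_iff_eq_neg]
  rcases mul_self_eq_one_iff.mp husq with h1 | h1
  · left
    exact ⟨hPa.mpr h1, fun hb => hne11 (h1.symm.trans (hPb.mp hb))⟩
  · right
    exact ⟨hPb.mpr h1, fun ha => hne11 ((hPa.mp ha).symm.trans h1)⟩
end

section
/- Let p be a prime with p ≡ 1 (mod 8) and let π ∈ ℤ[√2] be an element of norm p with conjugate π′. Then π is a square modulo π′ if and only if 2 is a fourth power in 𝔽_p, i.e. if and only if there exists z ∈ 𝔽_p with z⁴ = 2. -/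
lemma aux_isSquare_b (p : ℕ) (hp : Nat.Prime p) (hmod : p % 8 = 1)
    (a b : ℤ) (hnorm : a ^ 2 - 2 * b ^ 2 = (p : ℤ)) (hpb : ¬(p : ℤ) ∣ b) :
    IsSquare ((b : ZMod p)) := by
  haveI : Fact p.Prime := ⟨hp⟩
  have hp2 : p ≠ 2 := by omega
  have hb0 : b ≠ 0 := fun h => hpb (h ▸ dvd_zero _)
  have hbn0 : b.natAbs ≠ 0 := Int.natAbs_ne_zero.mpr hb0
  set k := b.natAbs.factorization 2 with hk
  set m := b.natAbs / 2 ^ k with hm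
  have hmb : 2 ^ k * m = b.natAbs := Nat.ordProj_mul_ordCompl_eq_self b.natAbs 2
  have hmodd : ¬ 2 ∣ m := Nat.not_dvd_ordCompl Nat.prime_two hbn0
  have hmdvdn : m ∣ b.natAbs := Dvd.intro_left _ hmb
  have hmdvd : (m : ℤ) ∣ b := Int.dvd_natAbs.mp (Int.natCast_dvd_natCast.mpr hmdvdn)
  -- coprimality of a and m
  have hcop : Int.gcd a (m : ℤ) = 1 := by
    by_contra hne
    obtain ⟨q, hq, hqd⟩ := Nat.exists_prime_and_dvd hne
    have hqa : (q : ℤ) ∣ a := (Int.natCast_dvd_natCast.mpr hqd).trans (Int.gcd_dvd_left _ _)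
    have hqm : q ∣ m := by
      have h2 : (q : ℤ) ∣ (m : ℤ) := (Int.natCast_dvd_natCast.mpr hqd).trans (Int.gcd_dvd_right _ _)
      exact_mod_cast h2
    have hqb : (q : ℤ) ∣ b := (Int.natCast_dvd_natCast.mpr hqm).trans hmdvd
    have hq2p : (q : ℤ) ^ 2 ∣ (p : ℤ) := by
      rw [← hnorm]
      exact dvd_sub (pow_dvd_pow_of_dvd hqa 2) (Dvd.dvd.mul_left (pow_dvd_pow_of_dvd hqb 2) 2)
    have hq2p' : q ^ 2 ∣ p := by exact_mod_cast hq2p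
    have hqp : q = p :=
      (Nat.prime_dvd_prime_iff_eq hq hp).mp ((dvd_pow_self q two_ne_zero).trans hq2p')
    have hle := Nat.le_of_dvd hp.pos (hqp ▸ hq2p')
    have h2le := hp.two_le
    nlinarith
  have hpm : ¬ (p : ℤ) ∣ (m : ℤ) := fun h => hpb (h.trans hmdvd)
  have hm_ne : ((m : ℤ) : ZMod p) ≠ 0 := by
    rwa [Ne, ZMod.intCast_zmod_eq_zero_iff_dvd]
  have hmoddO : Odd m := Nat.odd_iff.mpr (by omega)
  have hJm : legendreSym p (m : ℤ) = 1 := by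
    rw [jacobiSym.legendreSym.to_jacobiSym]
    rw [← jacobiSym.quadratic_reciprocity_one_mod_four (by omega : p % 4 = 1) hmoddO]
    have hcong : ((p : ℤ)) % (m : ℤ) = (a ^ 2) % (m : ℤ) := by
      have hdvd : (m : ℤ) ∣ a ^ 2 - (p : ℤ) := by
        have : a ^ 2 - (p : ℤ) = 2 * b ^ 2 := by linarith
        rw [this]
        exact Dvd.dvd.mul_left (hmdvd.trans (dvd_pow_self b two_ne_zero)) 2
      exact (Int.modEq_iff_dvd.mpr hdvd)
    rw [jacobiSym.mod_left' hcong]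
    exact jacobiSym.sq_one' hcop
  have hsm : IsSquare (((m : ℤ) : ZMod p)) := (legendreSym.eq_one_iff p hm_ne).mp hJm
  have hs2 : IsSquare (2 : ZMod p) := (ZMod.exists_sq_eq_two_iff hp2).mpr (Or.inl hmod)
  have hsm1 : IsSquare (-1 : ZMod p) := (ZMod.exists_sq_eq_neg_one_iff).mpr (by omega)
  have hsign : IsSquare ((b.sign : ZMod p)) := by
    rcases hb0.lt_or_gt with h | h
    · rw [Int.sign_eq_neg_one_of_neg h]; push_cast; exact hsm1
    · rw [Int.sign_eq_one_of_pos h]; push_cast; exact IsSquare.one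
  have hbeq : (b : ZMod p) = (b.sign : ZMod p) * (2 : ZMod p) ^ k * ((m : ℤ) : ZMod p) := by
    have habs : ((2 ^ k * m : ℕ) : ℤ) = (b.natAbs : ℤ) := by exact_mod_cast hmb
    have hb' : b = b.sign * ((2 ^ k * m : ℕ) : ℤ) := by rw [habs, Int.sign_mul_natAbs]
    conv_lhs => rw [hb']
    push_cast
    ring
  rw [hbeq]
  exact ((hsign.mul (hs2.pow k)).mul hsm)

/-- Let `p ≡ 1 (mod 8)` be prime and `π ∈ ℤ[√2]` of norm `p` with conjugate `π′ = star π`.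
Then `π` is a square modulo `π′` if and only if `2` is a fourth power in `𝔽_p`. -/
theorem sq_mod_conj_iff_two_fourth_power (p : ℕ) (hp : Nat.Prime p) (hmod : p % 8 = 1)
    (π : ℤ√2) (hπ : π.norm = (p : ℤ)) :
    (∃ σ : ℤ√2, star π ∣ π - σ ^ 2) ↔ ∃ z : ZMod p, z ^ 4 = 2 := by
  haveI : Fact p.Prime := ⟨hp⟩
  have hp2 : p ≠ 2 := by omega
  have hpI : Prime ((p : ℤ)) := Nat.prime_iff_prime_int.mp hp
  set a := π.re with ha
  set b := π.im with hb
  have hnorm : a ^ 2 - 2 * b ^ 2 = (p : ℤ) := by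
    have h := hπ
    rw [Zsqrtd.norm_def] at h
    ring_nf at h ⊢
    linarith
  have hp0 : (p : ℤ) ≠ 0 := by exact_mod_cast hp.ne_zero
  have hpb : ¬ (p : ℤ) ∣ b := by
    intro h
    have hpa2 : (p : ℤ) ∣ a ^ 2 := by
      have he : a ^ 2 = (p : ℤ) + 2 * b ^ 2 := by linarith
      rw [he]
      exact dvd_add dvd_rfl (Dvd.dvd.mul_left (dvd_pow h two_ne_zero) 2)
    have hpa : (p : ℤ) ∣ a := hpI.dvd_of_dvd_pow hpa2
    have hsq0 : (p : ℤ) ^ 2 ∣ a ^ 2 - 2 * b ^ 2 :=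
      dvd_sub (pow_dvd_pow_of_dvd hpa 2) (Dvd.dvd.mul_left (pow_dvd_pow_of_dvd h 2) 2)
    have hsq : (p : ℤ) ^ 2 ∣ (p : ℤ) := hnorm ▸ hsq0
    have hsq' : p ^ 2 ∣ p := by exact_mod_cast hsq
    have hle := Nat.le_of_dvd hp.pos hsq'
    nlinarith [hp.two_le]
  have hA2 : ((a : ZMod p)) ^ 2 = 2 * ((b : ZMod p)) ^ 2 := by
    have h := congrArg (fun z : ℤ => ((z : ZMod p))) hnorm
    push_cast at h
    simp [ZMod.natCast_self] at h
    linear_combination h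
  have hB : ((b : ZMod p)) ≠ 0 := by
    rwa [Ne, ZMod.intCast_zmod_eq_zero_iff_dvd]
  have h2ne : (2 : ZMod p) ≠ 0 := by
    have h22 : ((2 : ℕ) : ZMod p) ≠ 0 := by
      rw [Ne, ZMod.natCast_eq_zero_iff]
      intro h
      have h1 := Nat.le_of_dvd two_pos h
      have h2 := hp.two_le
      omega
    exact_mod_cast h22
  have hA : ((a : ZMod p)) ≠ 0 := by
    intro h
    rw [h] at hA2
    have : ((b : ZMod p)) ^ 2 = 0 := by
      field_simp at hA2
      simpa [h2ne] using hA2.symm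
    exact hB (pow_eq_zero_iff two_ne_zero |>.mp this)
  -- component formulas
  have him_eq : ∀ σ : ℤ√2, (π * (π - σ ^ 2)).im
      = a * (b - 2 * σ.re * σ.im) + b * (a - (σ.re ^ 2 + 2 * σ.im ^ 2)) := by
    intro σ
    simp [Zsqrtd.im_mul, Zsqrtd.re_mul, Zsqrtd.re_sub, Zsqrtd.im_sub, pow_two]
    ring
  have hre_im : ∀ x : ℤ√2, (π * x).re = a * x.re + 2 * (b * x.im)
      ∧ (π * x).im = a * x.im + b * x.re := by
    intro x
    constructor <;> simp [Zsqrtd.re_mul, Zsqrtd.im_mul] <;> ring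
  have h1 : (∃ σ : ℤ√2, star π ∣ π - σ ^ 2) ↔ ∃ σ : ℤ√2, (p : ℤ) ∣ (π * (π - σ ^ 2)).im := by
    constructor
    · rintro ⟨σ, hd⟩
      refine ⟨σ, ?_⟩
      have hdd : ((p : ℤ) : ℤ√2) ∣ π * (π - σ ^ 2) := by
        rw [← hπ, Zsqrtd.norm_eq_mul_conj]
        exact mul_dvd_mul_left π hd
      exact ((Zsqrtd.intCast_dvd _ _).mp hdd).2
    · rintro ⟨σ, him⟩
      set x := π - σ ^ 2 with hx
      have hre : (p : ℤ) ∣ (π * x).re := by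
        have key : b * (π * x).re = a * (π * x).im - (p : ℤ) * x.im := by
          rw [(hre_im x).1, (hre_im x).2]
          linear_combination (-x.im) * hnorm
        have hd2 : (p : ℤ) ∣ b * (π * x).re := by
          rw [key]
          exact dvd_sub (him.mul_left a) (dvd_mul_right _ _)
        rcases hpI.dvd_mul.mp hd2 with h | h
        · exact absurd h hpb
        · exact h
      obtain ⟨r1, hr1⟩ := hre
      obtain ⟨r2, hr2⟩ := him
      rw [(hre_im x).1] at hr1
      rw [(hre_im x).2] at hr2
      refine ⟨σ, ⟨⟨r1, r2⟩, ?_⟩⟩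
      have e1 : x.re = a * r1 - 2 * (b * r2) := by
        apply mul_left_cancel₀ hp0
        linear_combination a * hr1 - 2 * b * hr2 - x.re * hnorm
      have e2 : x.im = a * r2 - b * r1 := by
        apply mul_left_cancel₀ hp0
        linear_combination a * hr2 - b * hr1 - x.im * hnorm
      rw [Zsqrtd.ext_iff]
      constructor
      · simp only [Zsqrtd.re_mul, Zsqrtd.re_star, Zsqrtd.im_star]
        linear_combination e1
      · simp only [Zsqrtd.im_mul, Zsqrtd.re_star, Zsqrtd.im_star]
        linear_combination e2
  have h2 : (∃ σ : ℤ√2, (p : ℤ) ∣ (π * (π - σ ^ 2)).im)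
      ↔ ∃ w : ZMod p, w ^ 2 = 2 * ((a : ZMod p)) * ((b : ZMod p)) ^ 2 := by
    constructor
    · rintro ⟨σ, him⟩
      rw [him_eq σ, ← ZMod.intCast_zmod_eq_zero_iff_dvd] at him
      push_cast at him
      refine ⟨(b : ZMod p) * ((σ.re : ℤ) : ZMod p) + (a : ZMod p) * ((σ.im : ℤ) : ZMod p), ?_⟩
      linear_combination (-(b : ZMod p)) * him + (((σ.im : ℤ) : ZMod p)) ^ 2 * hA2
    · rintro ⟨w, hw⟩
      refine ⟨⟨((w * ((b : ZMod p))⁻¹).val : ℤ), 0⟩, ?_⟩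
      rw [him_eq, ← ZMod.intCast_zmod_eq_zero_iff_dvd]
      push_cast
      rw [ZMod.natCast_val, ZMod.cast_id]
      field_simp
      linear_combination -hw
  have hsB : IsSquare ((b : ZMod p)) := aux_isSquare_b p hp hmod a b hnorm hpb
  have hs2 : IsSquare (2 : ZMod p) := (ZMod.exists_sq_eq_two_iff hp2).mpr (Or.inl hmod)
  have hsm1 : IsSquare (-1 : ZMod p) := ZMod.exists_sq_eq_neg_one_iff.mpr (by omega)
  set r : ZMod p := (a : ZMod p) * ((b : ZMod p))⁻¹ with hrdef
  have hr : r ^ 2 = 2 := by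
    rw [hrdef]
    field_simp
    linear_combination hA2
  have hrne : r ≠ 0 := mul_ne_zero hA (inv_ne_zero hB)
  have hne2AB : (2 * ((a : ZMod p)) * ((b : ZMod p)) ^ 2) ≠ 0 :=
    mul_ne_zero (mul_ne_zero h2ne hA) (pow_ne_zero 2 hB)
  have hiff : IsSquare r ↔ IsSquare (2 * ((a : ZMod p)) * ((b : ZMod p)) ^ 2) := by
    rw [← quadraticChar_one_iff_isSquare hrne, ← quadraticChar_one_iff_isSquare hne2AB]
    have hmulsq : quadraticChar (ZMod p) (r * (2 * ((a : ZMod p)) * ((b : ZMod p)) ^ 2)) = 1 := by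
      have harg : r * (2 * ((a : ZMod p)) * ((b : ZMod p)) ^ 2)
          = (2 * (b : ZMod p)) * ((a : ZMod p)) ^ 2 := by
        rw [hrdef]
        field_simp
      rw [harg, map_mul, quadraticChar_sq_one' hA, mul_one,
        (quadraticChar_one_iff_isSquare (mul_ne_zero h2ne hB)).mpr (hs2.mul hsB)]
    rw [map_mul] at hmulsq
    rcases quadraticChar_dichotomy hrne with h | h <;>
      rcases quadraticChar_dichotomy hne2AB with h' | h' <;>
        simp [h, h'] at hmulsq ⊢
  have h4 : (∃ z : ZMod p, z ^ 4 = 2) ↔ IsSquare r := by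
    constructor
    · rintro ⟨z, hz⟩
      have hzz : (z ^ 2 - r) * (z ^ 2 + r) = 0 := by linear_combination hz - hr
      rcases mul_eq_zero.mp hzz with h | h
      · exact ⟨z, by linear_combination -h⟩
      · have hnr : IsSquare (-r) := ⟨z, by linear_combination -h⟩
        have := hsm1.mul hnr
        rwa [neg_one_mul, neg_neg] at this
    · rintro ⟨c, hc⟩
      exact ⟨c, by linear_combination (-(c * c) - r) * hc + hr⟩
  rw [h1, h2, h4, hiff]
  constructor
  · rintro ⟨w, hw⟩
    exact ⟨w, by rw [← hw]; ring⟩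
  · rintro ⟨w, hw⟩
    exact ⟨w, by rw [hw]; ring⟩
end

section
/- For any prime p with p ≡ 1 (mod 4), there exists a unit u in the ring of integers of the real quadratic field ℚ(√p) whose norm to ℚ equals −1 (equivalently, a fundamental unit of ℚ(√p) has norm −1). -/
open Pell

lemma neg_pell_int (p : ℕ) (hp : Nat.Prime p) (hmod : p % 4 = 1) :
    ∃ a b : ℤ, a ≠ 0 ∧ a ^ 2 - (p : ℤ) * b ^ 2 = -1 := by
  have hpz : (0:ℤ) < (p:ℤ) := by exact_mod_cast hp.pos
  have hprime : Prime (p : ℤ) := Nat.prime_iff_prime_int.mp hp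
  have hpmod : (p : ℤ) % 4 = 1 := by omega
  obtain ⟨x, y, hx1, hy0, hxy, hmin⟩ :
      ∃ x y : ℤ, 1 < x ∧ 0 < y ∧ x ^ 2 - (p:ℤ) * y ^ 2 = 1 ∧
        ∀ s t : ℤ, 1 < s → s ^ 2 - (p:ℤ) * t ^ 2 = 1 → x ≤ s := by
    obtain ⟨A, hA⟩ := Pell.IsFundamental.exists_of_not_isSquare hpz hprime.not_isSquare
    obtain ⟨h1, h2, h3⟩ := hA
    exact ⟨A.x, A.y, h1, h2, A.prop,
      fun s t hs hst => h3 (b := Pell.Solution₁.mk s t hst)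
        (by rwa [Pell.Solution₁.x_mk])⟩
  -- x is odd
  obtain ⟨m, hm⟩ : ∃ m, x = 2 * m + 1 := by
    rcases Int.even_or_odd x with ⟨m, hm⟩ | ⟨m, hm⟩
    · exfalso
      rcases Int.even_or_odd y with ⟨n, hn⟩ | ⟨n, hn⟩
      · rw [hm, hn] at hxy
        have h4 : 4 * (m * m - (p:ℤ) * (n * n)) = 1 := by ring_nf; ring_nf at hxy; linarith
        omega
      · rw [hm, hn] at hxy
        have h4 : 4 * (m * m - (p:ℤ) * (n * n) - p * n) - p = 1 := by
          ring_nf; ring_nf at hxy; linarith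
        omega
    · exact ⟨m, by omega⟩
  -- y is even
  obtain ⟨n, hn⟩ : ∃ n, y = 2 * n := by
    rcases Int.even_or_odd y with ⟨n, hn⟩ | ⟨n, hn⟩
    · exact ⟨n, by omega⟩
    · exfalso
      rw [hm, hn] at hxy
      have h4 : 4 * ((m * m + m) - (p:ℤ) * (n * n + n)) - p = 0 := by
        ring_nf; ring_nf at hxy; linarith
      omega
  have hm1 : 1 ≤ m := by omega
  have hn1 : 1 ≤ n := by omega
  have key : (p:ℤ) * n ^ 2 = m * (m + 1) := by
    have : x ^ 2 - 1 = (p:ℤ) * y ^ 2 := by linarith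
    rw [hm, hn] at this; nlinarith
  have hcop : IsCoprime m (m + 1) := ⟨-1, 1, by ring⟩
  have hpd : (p:ℤ) ∣ m * (m + 1) := ⟨n ^ 2, key.symm⟩
  rcases hprime.dvd_mul.mp hpd with hcase | hcase
  · -- p ∣ m : leads to a smaller solution, contradiction
    exfalso
    obtain ⟨w, hw⟩ := hcase
    have hn2 : w * (m + 1) = n ^ 2 := by
      have : (p:ℤ) * (w * (m + 1)) = (p:ℤ) * n ^ 2 := by rw [key, hw]; ring
      exact mul_left_cancel₀ hpz.ne' this
    have hcop2 : IsCoprime w (m + 1) := hcop.of_isCoprime_of_dvd_left ⟨p, by rw [hw]; ring⟩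
    obtain ⟨s, hs⟩ := Int.sq_of_isCoprime hcop2 hn2
    obtain ⟨t, ht⟩ := Int.sq_of_isCoprime hcop2.symm (by rw [← hn2]; ring)
    have hw0 : 0 < w := by
      by_contra h
      push_neg at h
      have := mul_nonpos_of_nonneg_of_nonpos hpz.le h
      linarith
    have hws : w = s ^ 2 := by
      rcases hs with h | h
      · exact h
      · exfalso; nlinarith [sq_nonneg s]
    have hmt : m + 1 = t ^ 2 := by
      rcases ht with h | h
      · exact h
      · exfalso; nlinarith [sq_nonneg t]
    have hsol : |t| ^ 2 - (p:ℤ) * |s| ^ 2 = 1 := by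
      rw [sq_abs, sq_abs, ← hmt, ← hws]; rw [hw]; ring
    have ht1 : 1 < |t| := by
      by_contra h
      push_neg at h
      have : t ^ 2 ≤ 1 := by
        have := abs_nonneg t; nlinarith [sq_abs t]
      omega
    have := hmin _ _ ht1 hsol
    have h2 : x ^ 2 ≤ |t| ^ 2 := by nlinarith [abs_nonneg t]
    rw [sq_abs, ← hmt, hm] at h2
    nlinarith
  · -- p ∣ m + 1 : gives negative Pell solution
    obtain ⟨w, hw⟩ := hcase
    have hn2 : m * w = n ^ 2 := by
      have : (p:ℤ) * (m * w) = (p:ℤ) * n ^ 2 := by rw [key, hw]; ring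
      exact mul_left_cancel₀ hpz.ne' this
    have hcop2 : IsCoprime m w := hcop.of_isCoprime_of_dvd_right ⟨p, by rw [hw]; ring⟩
    obtain ⟨s, hs⟩ := Int.sq_of_isCoprime hcop2 hn2
    obtain ⟨t, ht⟩ := Int.sq_of_isCoprime hcop2.symm (by rw [← hn2]; ring)
    have hw0 : 0 < w := by
      by_contra h
      push_neg at h
      have := mul_nonpos_of_nonneg_of_nonpos hpz.le h
      linarith
    have hms : m = s ^ 2 := by
      rcases hs with h | h
      · exact h
      · exfalso; nlinarith [sq_nonneg s]
    have hwt : w = t ^ 2 := by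
      rcases ht with h | h
      · exact h
      · exfalso; nlinarith [sq_nonneg t]
    refine ⟨s, t, ?_, ?_⟩
    · intro h; rw [h] at hms; simp at hms; omega
    · have : s ^ 2 - (p:ℤ) * t ^ 2 = m - (m + 1) := by rw [← hms, ← hwt, ← hw]
      linarith

open Polynomial IntermediateField

theorem main_alg (p : ℕ) (hp : Nat.Prime p)
    (K : Type) [Field K] [NumberField K] (hK : Module.finrank ℚ K = 2)
    (α : K) (hα : α ^ 2 = (p : K))
    (a b : ℤ) (ha : a ≠ 0) (hab : a ^ 2 - (p : ℤ) * b ^ 2 = -1) :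
    ∃ u : (NumberField.RingOfIntegers K)ˣ,
      Algebra.norm ℚ ((u : NumberField.RingOfIntegers K) : K) = -1 := by
  have hb : b ≠ 0 := by rintro rfl; simp at hab; nlinarith [sq_nonneg a]
  set β : K := (a : K) + (b : K) * α with hβdef
  set γ : K := (b : K) * α - (a : K) with hγdef
  have habK : (a : K) ^ 2 - (p : K) * (b : K) ^ 2 = -1 := by
    exact_mod_cast congrArg (Int.cast : ℤ → K) hab
  have hβγ : β * γ = 1 := by
    have h1 : β * γ = (b : K) ^ 2 * α ^ 2 - (a : K) ^ 2 := by rw [hβdef, hγdef]; ring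
    rw [h1, hα]; linear_combination -habK
  have hβsq : β ^ 2 = 2 * (a : K) * β + 1 := by
    have h1 : β ^ 2 = (b:K) ^ 2 * α ^ 2 + 2 * a * b * α + (a:K) ^ 2 := by rw [hβdef]; ring
    rw [h1, hα, hβdef]; linear_combination -habK
  have hγsq : γ ^ 2 = -(2 * (a : K)) * γ + 1 := by
    have h1 : γ ^ 2 = (b:K) ^ 2 * α ^ 2 - 2 * a * b * α + (a:K) ^ 2 := by rw [hγdef]; ring
    rw [h1, hα, hγdef]; linear_combination -habK
  -- integrality over ℤ
  have hint : ∀ (x : K) (c : ℤ), x ^ 2 = (c : K) * x + 1 → IsIntegral ℤ x := by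
    intro x c hx
    refine ⟨X ^ 2 - (C c * X + C 1), ?_, ?_⟩
    · have hdeg : (C c * X + C 1).degree ≤ 1 := by compute_degree
      exact Polynomial.monic_X_pow_sub (hdeg.trans_lt (by norm_num))
    · simp only [eval₂_sub, eval₂_add, eval₂_mul, eval₂_pow, eval₂_X, eval₂_C]
      have h1 : algebraMap ℤ K c = (c : K) := map_intCast _ c
      have h2 : algebraMap ℤ K 1 = 1 := map_one _
      rw [h1, h2]
      linear_combination hx
  have hβint : IsIntegral ℤ β := hint β (2 * a) (by push_cast; exact hβsq)
  have hγint : IsIntegral ℤ γ := hint γ (-(2 * a)) (by push_cast; exact hγsq)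
  -- the unit
  set B : NumberField.RingOfIntegers K := ⟨β, hβint⟩ with hB
  set C' : NumberField.RingOfIntegers K := ⟨γ, hγint⟩ with hC
  have hBC : B * C' = 1 := by
    ext
    push_cast [hB, hC]
    exact hβγ
  refine ⟨⟨B, C', hBC, by rw [mul_comm]; exact hBC⟩, ?_⟩
  -- now compute the norm of β
  show Algebra.norm ℚ β = -1
  have hβQ : IsIntegral ℚ β := hβint.tower_top
  -- the minimal polynomial of β is X^2 - 2a X - 1
  set q : ℚ[X] := X ^ 2 - (C (2 * (a:ℚ)) * X + C 1) with hq
  have hqmonic : q.Monic := by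
    have hdeg : (C (2 * (a:ℚ)) * X + C 1).degree ≤ 1 := by compute_degree
    exact Polynomial.monic_X_pow_sub (hdeg.trans_lt (by norm_num))
  have hqdeg : q.natDegree = 2 := by
    rw [hq]
    compute_degree!
  have hqaeval : aeval β q = 0 := by
    rw [hq]
    simp only [map_sub, map_add, map_mul, map_pow, aeval_X, aeval_C]
    have h1 : algebraMap ℚ K ((a:ℚ)) = (a : K) := by
      rw [show ((a:ℚ)) = ((a : ℤ) : ℚ) by norm_cast, map_intCast]
    have h2 : algebraMap ℚ K 2 = 2 := by norm_num
    have h3 : algebraMap ℚ K 1 = 1 := map_one _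
    rw [h1, h2, h3]
    linear_combination hβsq
  have hdvd : minpoly ℚ β ∣ q := minpoly.dvd ℚ β hqaeval
  -- β is not rational
  have hβnotbot : β ∉ (algebraMap ℚ K).range := by
    rintro ⟨r, hr⟩
    have hbK : (b : K) ≠ 0 := Int.cast_ne_zero.mpr hb
    have hbQ : ((b:ℚ)) ≠ 0 := Int.cast_ne_zero.mpr hb
    set q0 : ℚ := (r - a) / b with hq0def
    have hq0 : algebraMap ℚ K q0 = α := by
      rw [hq0def, map_div₀, map_sub, map_intCast, map_intCast, hr, hβdef]
      field_simp
      ring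
    have hsq : q0 ^ 2 = (p : ℚ) := by
      apply (algebraMap ℚ K).injective
      rw [map_pow, hq0, hα, map_natCast]
    have hint0 : IsIntegral ℤ q0 := by
      refine ⟨X ^ 2 - C (p : ℤ), Polynomial.monic_X_pow_sub (Polynomial.degree_C_le.trans_lt (by norm_num)), ?_⟩
      simp only [eval₂_sub, eval₂_pow, eval₂_X, eval₂_C]
      have : algebraMap ℤ ℚ (p : ℤ) = (p : ℚ) := by push_cast; simp
      rw [this, hsq, sub_self]
    obtain ⟨z, hz⟩ := IsIntegrallyClosed.isIntegral_iff.mp hint0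
    have hzq : ((z:ℚ)) ^ 2 = (p:ℚ) := by
      rw [show ((z:ℚ)) = q0 from by rw [← hz]; simp]
      exact hsq
    have hz2 : z ^ 2 = (p : ℤ) := by exact_mod_cast hzq
    exact (Nat.prime_iff_prime_int.mp hp).not_isSquare ⟨z, by rw [← hz2]; ring⟩
  have hdeg2 : (minpoly ℚ β).natDegree = 2 := by
    have h2 : 2 ≤ (minpoly ℚ β).natDegree := (minpoly.two_le_natDegree_iff hβQ).mpr hβnotbot
    have hle : (minpoly ℚ β).natDegree ≤ 2 := by
      have := Polynomial.natDegree_le_of_dvd hdvd (hqmonic.ne_zero)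
      omega
    omega
  have hminpoly : minpoly ℚ β = q := by
    refine Polynomial.eq_of_monic_of_associated (minpoly.monic hβQ) hqmonic ?_
    exact Polynomial.associated_of_dvd_of_natDegree_le hdvd hqmonic.ne_zero (by omega)
  -- power basis
  have hfin : Module.finrank ℚ ℚ⟮β⟯ = 2 := by
    rw [IntermediateField.adjoin.finrank hβQ, hdeg2]
  have htop : ℚ⟮β⟯ = ⊤ := by
    refine IntermediateField.eq_of_le_of_finrank_eq le_top ?_
    rw [hfin, IntermediateField.finrank_top', hK]
  let e : ℚ⟮β⟯ ≃ₐ[ℚ] K := (IntermediateField.equivOfEq htop).trans IntermediateField.topEquiv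
  let pb := (IntermediateField.adjoin.powerBasis hβQ).map e
  have hpbgen : pb.gen = β := by
    simp [pb, e, PowerBasis.map]
  have hpbdim : pb.dim = 2 := by
    simp [pb, PowerBasis.map, IntermediateField.adjoin.powerBasis, hdeg2]
  have := Algebra.PowerBasis.norm_gen_eq_coeff_zero_minpoly pb
  rw [hpbgen, hpbdim, hminpoly] at this
  rw [this, hq]
  simp

/-- For a prime `p ≡ 1 (mod 4)`, the real quadratic field `ℚ(√p)` has a unit of norm `−1`
(equivalently, a fundamental unit of `ℚ(√p)` has norm `−1`). A number field `K` of degree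
`2` over `ℚ` containing a square root of `p` is precisely `ℚ(√p)`. -/
theorem exists_unit_norm_neg_one (p : ℕ) (hp : Nat.Prime p) (hmod : p % 4 = 1)
    (K : Type) [Field K] [NumberField K] (hK : Module.finrank ℚ K = 2)
    (α : K) (hα : α ^ 2 = (p : K)) :
    ∃ u : (NumberField.RingOfIntegers K)ˣ,
      Algebra.norm ℚ ((u : NumberField.RingOfIntegers K) : K) = -1 := by
  obtain ⟨a, b, ha, hab⟩ := neg_pell_int p hp hmod
  exact main_alg p hp K hK α hα a b ha hab
end

section
/- Let K be a number field whose class number is odd, and let S be a finite set of places of K containing all archimedean places. Then the natural map R_S^×/(R_S^×)² → K(S) induced by the inclusion R_S^× ⊆ K^× is an isomorphism, where K(S) = {x ∈ K^×/(K^×)² : ord_v(x) ≡ 0 (mod 2) for all finite places v ∉ S}. -/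
open IsDedekindDomain NumberField
open scoped nonZeroDivisors

namespace SelmerAux

variable {K : Type} [Field K] [NumberField K]

/-- The count of `v` in the principal fractional ideal generated by `x` is minus the
additive valuation of `x`. -/
lemma count_spanSingleton (v : HeightOneSpectrum (𝓞 K)) (x : Kˣ) :
    FractionalIdeal.count K v (FractionalIdeal.spanSingleton (𝓞 K)⁰ (x : K)) =
      -Multiplicative.toAdd (v.valuationOfNeZero x) := by
  have hx0 : (x : K) ≠ 0 := x.ne_zero
  have hinj : Function.Injective (algebraMap (𝓞 K) K) :=
    FaithfulSMul.algebraMap_injective _ _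
  have ha0 : (algebraMap (𝓞 K) K ((IsLocalization.sec (𝓞 K)⁰ (x : K)).2 : 𝓞 K)) ≠ 0 := by
    rw [map_ne_zero_iff _ hinj]
    exact nonZeroDivisors.coe_ne_zero _
  have hsec : (x : K) * algebraMap (𝓞 K) K ((IsLocalization.sec (𝓞 K)⁰ (x : K)).2 : 𝓞 K) =
      algebraMap (𝓞 K) K (IsLocalization.sec (𝓞 K)⁰ (x : K)).1 :=
    IsLocalization.sec_spec (𝓞 K)⁰ (x : K)
  have heq : FractionalIdeal.spanSingleton (𝓞 K)⁰ (x : K) =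
      FractionalIdeal.spanSingleton (𝓞 K)⁰
          ((algebraMap (𝓞 K) K ((IsLocalization.sec (𝓞 K)⁰ (x : K)).2 : 𝓞 K)))⁻¹ *
        ↑(Ideal.span {(IsLocalization.sec (𝓞 K)⁰ (x : K)).1} : Ideal (𝓞 K)) := by
    rw [FractionalIdeal.coeIdeal_span_singleton,
      FractionalIdeal.spanSingleton_mul_spanSingleton]
    congr 1
    field_simp
    linear_combination hsec
  have hne : FractionalIdeal.spanSingleton (𝓞 K)⁰ (x : K) ≠ 0 := by
    rw [ne_eq, FractionalIdeal.spanSingleton_eq_zero_iff]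
    exact hx0
  rw [FractionalIdeal.count_well_defined K v hne heq]
  show _ = -Multiplicative.toAdd (v.valuationOfNeZeroToFun x)
  simp only [HeightOneSpectrum.valuationOfNeZeroToFun, toAdd_ofAdd]
  ring

/-- The mod-2 valuation of the class of `x` is trivial iff the valuation of `x` is even. -/
lemma mod_two_eq_one_iff (v : HeightOneSpectrum (𝓞 K)) (x : Kˣ) :
    v.valuationOfNeZeroMod 2
        ((QuotientGroup.mk x : Kˣ ⧸ (powMonoidHom 2 : Kˣ →* Kˣ).range)) = 1 ↔
      Even (Multiplicative.toAdd (v.valuationOfNeZero x)) := by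
  rw [HeightOneSpectrum.valuationOfNeZeroMod]
  erw [MonoidHom.comp_apply]
  erw [← QuotientGroup.coe_mk',
    QuotientGroup.map_mk' (G := Kˣ) (N := MonoidHom.range (powMonoidHom 2))]
  simp only [MulEquiv.toMonoidHom_eq_coe, MonoidHom.coe_coe, EmbeddingLike.map_eq_one_iff]
  erw [EmbeddingLike.map_eq_one_iff (f := AddEquiv.toMultiplicative (Int.quotientZMultiplesNatEquivZMod 2)), QuotientGroup.eq_one_iff]
  rw [show ((v.valuationOfNeZero x) ∈
      AddSubgroup.toSubgroup (AddSubgroup.zmultiples ((2 : ℕ) : ℤ))) ↔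
      Multiplicative.toAdd (v.valuationOfNeZero x) ∈ AddSubgroup.zmultiples ((2 : ℕ) : ℤ) from
    Iff.rfl]
  rw [AddSubgroup.mem_zmultiples_iff]
  constructor
  · rintro ⟨k, hk⟩
    rw [smul_eq_mul] at hk
    exact ⟨k, by push_cast at hk; omega⟩
  · rintro ⟨k, hk⟩
    refine ⟨k, ?_⟩
    rw [smul_eq_mul]
    push_cast
    omega

end SelmerAux

/-- Let `K` be a number field with odd class number and let `S` be a finite set of
(finite) places of `K` (together with all archimedean places, which play no role in the
definitions below). The natural map `R_S^× / (R_S^×)² → K(S)`, induced by the inclusion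
of the `S`-units `R_S^× ⊆ K^×`, is an isomorphism onto the Selmer group
`K(S) = {x ∈ K^×/(K^×)² : ord_v(x) ≡ 0 mod 2 for all finite v ∉ S}`: the composite map
`R_S^× → K^× → K^×/(K^×)²` has kernel exactly the squares of `S`-units, and image exactly
`K(S)`. -/
theorem sunits_mod_squares_iso_selmer (K : Type) [Field K] [NumberField K]
    (hK : Odd (NumberField.classNumber K))
    (S : Set (HeightOneSpectrum (𝓞 K))) (hS : S.Finite) :
    MonoidHom.ker ((QuotientGroup.mk' (powMonoidHom 2 : Kˣ →* Kˣ).range).comp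
        (S.unit K).subtype)
      = (powMonoidHom 2 : ↥(S.unit K) →* ↥(S.unit K)).range ∧
    MonoidHom.range ((QuotientGroup.mk' (powMonoidHom 2 : Kˣ →* Kˣ).range).comp
        (S.unit K).subtype)
      = selmerGroup (R := 𝓞 K) (K := K) (S := S) (n := 2) := by
  classical
  constructor
  · -- kernel computation
    ext u
    simp only [MonoidHom.mem_ker, MonoidHom.comp_apply, Subgroup.coe_subtype,
      QuotientGroup.mk'_apply, QuotientGroup.eq_one_iff, MonoidHom.mem_range]
    constructor
    · rintro ⟨y, hy⟩
      rw [powMonoidHom_apply] at hy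
      have hymem : (y : Kˣ) ∈ S.unit K := by
        intro v hv
        have hu1 : v.valuationOfNeZero (u : Kˣ) = 1 := by
          rw [← WithZero.coe_inj]
          rw [HeightOneSpectrum.valuationOfNeZero_eq]
          rw [u.2 v hv]
          rfl
        have h2 : (v.valuationOfNeZero y) ^ 2 = 1 := by
          rw [← map_pow, hy, hu1]
        have h3 : Multiplicative.toAdd (v.valuationOfNeZero y) = 0 := by
          have := congrArg Multiplicative.toAdd h2
          rw [toAdd_pow] at this
          simp only [toAdd_one, smul_eq_mul, nsmul_eq_mul] at this
          push_cast at this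
          omega
        have h4 : v.valuationOfNeZero y = 1 := toAdd_eq_zero.mp h3
        have := congrArg (WithZero.coe) h4
        rw [HeightOneSpectrum.valuationOfNeZero_eq] at this
        exact this
      exact ⟨⟨y, hymem⟩, by ext; exact congrArg Units.val hy⟩
    · rintro ⟨z, rfl⟩
      exact ⟨(z : Kˣ), by rw [powMonoidHom_apply, powMonoidHom_apply]; rfl⟩
  · -- range computation
    ext c
    constructor
    · rintro ⟨u, rfl⟩
      intro v hv
      simp only [MonoidHom.comp_apply, Subgroup.coe_subtype, QuotientGroup.mk'_apply]
      rw [SelmerAux.mod_two_eq_one_iff]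
      have hu1 : v.valuationOfNeZero (u : Kˣ) = 1 := by
        rw [← WithZero.coe_inj, HeightOneSpectrum.valuationOfNeZero_eq, u.2 v hv]
        rfl
      rw [hu1]
      simp
    · intro hc
      obtain ⟨x, rfl⟩ := QuotientGroup.mk'_surjective _ c
      -- the counts of the principal ideal of `x`
      set f : HeightOneSpectrum (𝓞 K) → ℤ :=
        fun v => FractionalIdeal.count K v (FractionalIdeal.spanSingleton (𝓞 K)⁰ (x : K))
        with hf
      have hEven : ∀ v ∉ S, Even (f v) := by
        intro v hv
        have h := hc v hv
        rw [QuotientGroup.mk'_apply, SelmerAux.mod_two_eq_one_iff] at h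
        have hfv : f v = -Multiplicative.toAdd (v.valuationOfNeZero x) :=
          SelmerAux.count_spanSingleton v x
        rw [hfv]
        exact h.neg
      have hffin : {v : HeightOneSpectrum (𝓞 K) | f v ≠ 0}.Finite :=
        FractionalIdeal.finite_factors (FractionalIdeal.spanSingleton (𝓞 K)⁰ (x : K))
      set e : HeightOneSpectrum (𝓞 K) → ℤ := fun v => if v ∈ S then 0 else f v / 2 with he
      have he2 : ∀ v ∉ S, 2 * e v = f v := by
        intro v hv
        rw [he]
        simp only [if_neg hv]
        exact Int.mul_ediv_cancel' ((hEven v hv).two_dvd)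
      have hefin : ∀ᶠ v : HeightOneSpectrum (𝓞 K) in Filter.cofinite, e v = 0 := by
        rw [Filter.eventually_cofinite]
        refine hffin.subset ?_
        intro v hv
        simp only [Set.mem_setOf_eq, he] at hv ⊢
        intro h0
        rw [h0] at hv
        simp at hv
      set J₀ : FractionalIdeal (𝓞 K)⁰ K :=
        ∏ᶠ v : HeightOneSpectrum (𝓞 K), (v.asIdeal : FractionalIdeal (𝓞 K)⁰ K) ^ e v with hJ₀
      have hJc : ∀ v, FractionalIdeal.count K v J₀ = e v := fun v =>
        FractionalIdeal.count_finprod K v e hefin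
      have hJ0 : J₀ ≠ 0 := by
        rw [hJ₀]
        refine finprod_induction (fun I => I ≠ 0) one_ne_zero (fun a b ha hb => mul_ne_zero ha hb)
          (fun v => ?_)
        exact zpow_ne_zero _ (FractionalIdeal.coeIdeal_ne_zero.mpr v.ne_bot)
      set Ju : (FractionalIdeal (𝓞 K)⁰ K)ˣ := Units.mk0 J₀ hJ0 with hJu
      set Xu : (FractionalIdeal (𝓞 K)⁰ K)ˣ := toPrincipalIdeal (𝓞 K) K x with hXu
      set E : (FractionalIdeal (𝓞 K)⁰ K)ˣ := Xu⁻¹ * Ju ^ 2 with hE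
      have hcE : ∀ v ∉ S, FractionalIdeal.count K v (E : FractionalIdeal (𝓞 K)⁰ K) = 0 := by
        intro v hv
        rw [hE, Units.val_mul, Units.val_inv_eq_inv_val, Units.val_pow_eq_pow_val]
        rw [FractionalIdeal.count_mul K v (inv_ne_zero Xu.ne_zero) (pow_ne_zero _ Ju.ne_zero)]
        rw [FractionalIdeal.count_inv, FractionalIdeal.count_pow]
        have hXc : FractionalIdeal.count K v (Xu : FractionalIdeal (𝓞 K)⁰ K) = f v := by
          show _ = FractionalIdeal.count K v (FractionalIdeal.spanSingleton (𝓞 K)⁰ (x : K))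
          rw [hXu, coe_toPrincipalIdeal]
        have hJuc : FractionalIdeal.count K v (Ju : FractionalIdeal (𝓞 K)⁰ K) = e v := hJc v
        rw [hXc, hJuc]
        have := he2 v hv
        push_cast
        linarith
      -- class group argument
      obtain ⟨d, hd⟩ := hK
      set t : ClassGroup (𝓞 K) := ClassGroup.mk K Ju with ht
      have htX : ClassGroup.mk K Xu = 1 := by
        rw [ClassGroup.mk_eq_one_iff]
        exact ⟨⟨(x : K), by rw [hXu, coe_toPrincipalIdeal, FractionalIdeal.coe_spanSingleton]⟩⟩
      have hmkE : ClassGroup.mk K E = t ^ 2 := by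
        rw [hE, map_mul, map_inv, htX, map_pow, inv_one, one_mul, ht]
      have htcard : t ^ (2 * d + 1) = 1 := by
        have : t ^ NumberField.classNumber K = 1 := by
          rw [NumberField.classNumber]
          exact pow_card_eq_one
        rwa [hd] at this
      set W : (FractionalIdeal (𝓞 K)⁰ K)ˣ := Ju * (E ^ (d + 1))⁻¹ with hW
      have hmkW : ClassGroup.mk K W = 1 := by
        rw [hW, map_mul, map_inv, map_pow, hmkE, ← ht, ← pow_mul,
          show 2 * (d + 1) = (2 * d + 1) + 1 by ring, pow_succ, htcard, one_mul]
        exact mul_inv_cancel t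
      have hprin : ((W : FractionalIdeal (𝓞 K)⁰ K) : Submodule (𝓞 K) K).IsPrincipal :=
        ClassGroup.mk_eq_one_iff.mp hmkW
      obtain ⟨g, hg⟩ := @Submodule.IsPrincipal.principal _ _ _ _ _ _ hprin
      have hg0 : g ≠ 0 := by
        rintro rfl
        apply W.ne_zero
        apply FractionalIdeal.coeToSubmodule_injective
        show ((W : FractionalIdeal (𝓞 K)⁰ K) : Submodule (𝓞 K) K) =
          ((0 : FractionalIdeal (𝓞 K)⁰ K) : Submodule (𝓞 K) K)
        rw [hg]
        simp
      set y : Kˣ := Units.mk0 g hg0 with hy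
      have hWspan : (W : FractionalIdeal (𝓞 K)⁰ K) =
          FractionalIdeal.spanSingleton (𝓞 K)⁰ (y : K) := by
        apply FractionalIdeal.coeToSubmodule_injective
        show ((W : FractionalIdeal (𝓞 K)⁰ K) : Submodule (𝓞 K) K) =
          ((FractionalIdeal.spanSingleton (𝓞 K)⁰ (y : K)) : Submodule (𝓞 K) K)
        rw [FractionalIdeal.coe_spanSingleton, hg]
        rfl
      have hyc : ∀ v ∉ S, Multiplicative.toAdd (v.valuationOfNeZero y) = -(e v) := by
        intro v hv
        have h1 : FractionalIdeal.count K v (W : FractionalIdeal (𝓞 K)⁰ K) = e v := by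
          rw [hW, Units.val_mul, Units.val_inv_eq_inv_val, Units.val_pow_eq_pow_val]
          rw [FractionalIdeal.count_mul K v Ju.ne_zero
            (inv_ne_zero (pow_ne_zero _ E.ne_zero))]
          have hJuc : FractionalIdeal.count K v (Ju : FractionalIdeal (𝓞 K)⁰ K) = e v := hJc v
          rw [FractionalIdeal.count_inv, FractionalIdeal.count_pow, hcE v hv, hJuc]
          ring
        rw [hWspan, SelmerAux.count_spanSingleton] at h1
        omega
      set u : Kˣ := x * (y ^ 2)⁻¹ with hu
      have humem : u ∈ S.unit K := by
        intro v hv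
        have h1 : Multiplicative.toAdd (v.valuationOfNeZero u) = 0 := by
          rw [hu, map_mul, map_inv, map_pow]
          rw [toAdd_mul, toAdd_inv, toAdd_pow]
          have hfv : f v = -Multiplicative.toAdd (v.valuationOfNeZero x) :=
            SelmerAux.count_spanSingleton v x
          have hx' : Multiplicative.toAdd (v.valuationOfNeZero x) = -(f v) := by omega
          rw [hx', hyc v hv]
          have := he2 v hv
          simp only [nsmul_eq_mul, smul_eq_mul]
          push_cast
          omega
        have h2 : v.valuationOfNeZero u = 1 := toAdd_eq_zero.mp h1
        have := congrArg (WithZero.coe) h2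
        rw [HeightOneSpectrum.valuationOfNeZero_eq] at this
        exact this
      refine ⟨⟨u, humem⟩, ?_⟩
      simp only [MonoidHom.comp_apply, Subgroup.coe_subtype]
      rw [QuotientGroup.mk'_eq_mk']
      refine ⟨y ^ 2, ⟨y, rfl⟩, ?_⟩
      rw [hu]
      group
end

section
/- There are no rational numbers a, b with 2a² − 241b² = 723 (that is, the conic 2y₁² − 241y₄² = 3·241 has no rational points; in fact it has no points over ℚ₂). -/
open PadicInt

lemma zmod8_aux : ∀ a b c : ZMod 8, 2 * a ^ 2 - 241 * b ^ 2 = 723 * 4 * c →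
    (ZMod.castHom (pow_dvd_pow 2 (by norm_num : 1 ≤ 3)) (ZMod (2 ^ 1)) a = 0 ∧
     ZMod.castHom (pow_dvd_pow 2 (by norm_num : 1 ≤ 3)) (ZMod (2 ^ 1)) b = 0) := by
  decide

lemma zmod8_base : ∀ a b : ZMod 8, 2 * a ^ 2 - 241 * b ^ 2 ≠ 723 := by decide

lemma two_dvd_of_even_mod8 (A : ℤ_[2]) (h : ZMod.castHom (pow_dvd_pow 2 (by norm_num : 1 ≤ 3))
    (ZMod (2 ^ 1)) ((PadicInt.toZModPow 3) A) = 0) : (2 : ℤ_[2]) ∣ A := by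
  have h1 : (PadicInt.toZModPow 1) A = 0 := by
    have h2 := PadicInt.zmod_cast_comp_toZModPow (p := 2) 1 3 (by norm_num)
    calc (PadicInt.toZModPow 1) A
        = ((ZMod.castHom (pow_dvd_pow 2 (by norm_num : 1 ≤ 3)) (ZMod (2 ^ 1))).comp
          (PadicInt.toZModPow 3)) A := by rw [h2]
      _ = 0 := h
  have h3 := RingHom.mem_ker.mpr h1
  rw [PadicInt.ker_toZModPow, Ideal.mem_span_singleton, pow_one] at h3
  exact_mod_cast h3

lemma padic_descent : ∀ (k : ℕ) (A B : ℤ_[2]), 2 * A ^ 2 - 241 * B ^ 2 ≠ 723 * 4 ^ k := by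
  intro k
  induction k with
  | zero =>
    intro A B h
    have h8 : (2 : ZMod 8) * (PadicInt.toZModPow 3 A) ^ 2
        - 241 * (PadicInt.toZModPow 3 B) ^ 2 = 723 := by
      have := congrArg (PadicInt.toZModPow 3) h
      simpa [map_sub, map_mul, map_pow, map_ofNat] using this
    exact zmod8_base _ _ h8
  | succ k ih =>
    intro A B h
    have h8 : (2 : ZMod 8) * (PadicInt.toZModPow 3 A) ^ 2
        - 241 * (PadicInt.toZModPow 3 B) ^ 2 = 723 * 4 * ((4 : ZMod 8) ^ k) := by
      have := congrArg (PadicInt.toZModPow 3) h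
      simp only [map_sub, map_mul, map_pow, map_ofNat] at this
      rw [this]; ring
    obtain ⟨hA, hB⟩ := zmod8_aux _ _ _ h8
    obtain ⟨A', rfl⟩ := two_dvd_of_even_mod8 A hA
    obtain ⟨B', rfl⟩ := two_dvd_of_even_mod8 B hB
    apply ih A' B'
    have h4 : (4 : ℤ_[2]) * (2 * A' ^ 2 - 241 * B' ^ 2) = 4 * (723 * 4 ^ k) := by
      calc (4 : ℤ_[2]) * (2 * A' ^ 2 - 241 * B' ^ 2)
          = 2 * (2 * A') ^ 2 - 241 * (2 * B') ^ 2 := by ring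
        _ = 723 * 4 ^ (k + 1) := h
        _ = 4 * (723 * 4 ^ k) := by ring
    exact mul_left_cancel₀ (by norm_num) h4

/-- The conic `2y₁² − 241y₄² = 3·241 = 723` has no rational points; in fact it has no
points over the field `ℚ₂` of 2-adic numbers. -/
theorem conic_no_rational_points :
    (¬∃ a b : ℚ, 2 * a ^ 2 - 241 * b ^ 2 = 723) ∧
      ¬∃ a b : ℚ_[2], 2 * a ^ 2 - 241 * b ^ 2 = 723 := by
  have main : ¬∃ a b : ℚ_[2], 2 * a ^ 2 - 241 * b ^ 2 = 723 := by
    rintro ⟨a, b, h⟩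
    obtain ⟨m, hm⟩ := exists_nat_ge (max ‖a‖ ‖b‖)
    have hnorm2 : ‖(2 : ℚ_[2])‖ = 2⁻¹ := by
      simpa using Padic.norm_p (p := 2)
    have key : ∀ x : ℚ_[2], ‖x‖ ≤ m → ‖(2 : ℚ_[2]) ^ m * x‖ ≤ 1 := by
      intro x hx
      rw [norm_mul, _root_.norm_pow, hnorm2]
      have h2m : (m : ℝ) ≤ 2 ^ m := by exact_mod_cast (Nat.lt_two_pow_self (n := m)).le
      have hx2 : ‖x‖ ≤ 2 ^ m := hx.trans h2m
      calc (2⁻¹ : ℝ) ^ m * ‖x‖ ≤ (2⁻¹) ^ m * 2 ^ m :=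
            mul_le_mul_of_nonneg_left hx2 (by positivity)
        _ = 1 := by rw [← mul_pow]; norm_num
    have hA : ‖(2 : ℚ_[2]) ^ m * a‖ ≤ 1 := key a ((le_max_left _ _).trans hm)
    have hB : ‖(2 : ℚ_[2]) ^ m * b‖ ≤ 1 := key b ((le_max_right _ _).trans hm)
    set A : ℤ_[2] := ⟨_, hA⟩
    set B : ℤ_[2] := ⟨_, hB⟩
    apply padic_descent m A B
    have hcoe : ((2 * A ^ 2 - 241 * B ^ 2 : ℤ_[2]) : ℚ_[2]) = ((723 * 4 ^ m : ℤ_[2]) : ℚ_[2]) := by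
      push_cast
      show 2 * ((2:ℚ_[2]) ^ m * a) ^ 2 - 241 * ((2:ℚ_[2]) ^ m * b) ^ 2 = 723 * 4 ^ m
      have h4 : (4 : ℚ_[2]) ^ m = ((2:ℚ_[2]) ^ m) ^ 2 := by
        rw [show (4:ℚ_[2]) = 2 ^ 2 by norm_num, ← pow_mul, ← pow_mul, mul_comm]
      rw [h4, ← h]; ring
    exact Subtype.coe_injective hcoe
  refine ⟨?_, main⟩
  rintro ⟨a, b, h⟩
  exact main ⟨a, b, by exact_mod_cast congrArg (Rat.cast : ℚ → ℚ_[2]) h⟩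
end
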